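/- arXiv:2004.14882 — 5 statements merged into one kernel-verified Lean document; each statement's English description precedes it below -/
import Mathlib

section
/- Let K ⊆ ℝ^p be nonempty, closed and convex, F : ℝ^p → ℝ differentiable, G : ℝ^p → ℝ convex, and F̃ : K × K → ℝ such that for each y ∈ K, x ↦ F̃(x; y) is μ-strongly convex and differentiable with ∇₁F̃(y; y) = ∇F(y). Define x̂(y) := argmin_{x ∈ K} F̃(x; y) + G(x). Then y ∈ K is a fixed point of x̂ (i.e., x̂(y) = y) if and only if y is a stationary point of the problem min_{x∈K} F(x) + G(x), i.e., ⟨∇F(y), x − y⟩ + G(x) − G(y) ≥ 0 for all x ∈ K. -/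
open RealInnerProductSpace Topology

lemma aux_le_deriv (φ : ℝ → ℝ) (c c' : ℝ) (hd : HasDerivAt φ c 0)
    (h : ∀ t ∈ Set.Ioc (0:ℝ) 1, c' * t ≤ φ t - φ 0) : c' ≤ c := by
  have hT : Filter.Tendsto (slope φ 0) (𝓝[>] (0:ℝ)) (𝓝 c) :=
    (hasDerivAt_iff_tendsto_slope.mp hd).mono_left
      (nhdsWithin_mono _ (fun t ht => ne_of_gt ht))
  refine ge_of_tendsto hT ?_
  filter_upwards [Ioc_mem_nhdsGT one_pos] with t ht
  have hpos : (0:ℝ) < t := ht.1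
  rw [slope_def_field]
  rw [le_div_iff₀ (by simpa using hpos)]
  simpa [mul_comm] using h t ht

lemma aux_deriv_le (φ : ℝ → ℝ) (c c' : ℝ) (hd : HasDerivAt φ c 0)
    (h : ∀ t ∈ Set.Ioc (0:ℝ) 1, φ t - φ 0 ≤ c' * t) : c ≤ c' := by
  have := aux_le_deriv (fun t => -φ t) (-c) (-c') hd.neg (by
    intro t ht
    have := h t ht
    simp only [neg_sub, neg_mul] at *
    linarith)
  linarith

lemma aux_line_deriv {p : ℕ} (f : EuclideanSpace ℝ (Fin p) → ℝ)
    (g y v : EuclideanSpace ℝ (Fin p)) (hf : HasGradientAt f g y) :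
    HasDerivAt (fun t : ℝ => f (y + t • v)) ⟪g, v⟫ 0 := by
  have hline : HasDerivAt (fun t : ℝ => y + t • v) v 0 := by
    simpa using ((hasDerivAt_id (0:ℝ)).smul_const v).const_add y
  have hF := hf.hasFDerivAt
  rw [show y = (fun t : ℝ => y + t • v) 0 by simp] at hF
  have := hF.comp_hasDerivAt (0:ℝ) hline
  simp [InnerProductSpace.toDual_apply_apply] at this
  exact this

lemma aux_comb {p : ℕ} (y x : EuclideanSpace ℝ (Fin p)) (t : ℝ) :
    y + t • (x - y) = (1 - t) • y + t • x := by
  rw [smul_sub, sub_smul, one_smul]; abel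

theorem stmt1 {p : ℕ} (K : Set (EuclideanSpace ℝ (Fin p)))
    (hKne : K.Nonempty) (hKcl : IsClosed K) (hKcv : Convex ℝ K)
    (F : EuclideanSpace ℝ (Fin p) → ℝ) (F' : EuclideanSpace ℝ (Fin p) → EuclideanSpace ℝ (Fin p))
    (hF : ∀ x, HasGradientAt F (F' x) x)
    (G : EuclideanSpace ℝ (Fin p) → ℝ) (hG : ConvexOn ℝ Set.univ G)
    (Ft : EuclideanSpace ℝ (Fin p) → EuclideanSpace ℝ (Fin p) → ℝ)
    (Ft' : EuclideanSpace ℝ (Fin p) → EuclideanSpace ℝ (Fin p) → EuclideanSpace ℝ (Fin p))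
    (μ : ℝ) (hμ : 0 < μ)
    (hsc : ∀ y ∈ K, StrongConvexOn K μ (fun x => Ft x y))
    (hdiff : ∀ y ∈ K, ∀ x, HasGradientAt (fun z => Ft z y) (Ft' x y) x)
    (hconsist : ∀ y ∈ K, Ft' y y = F' y)
    (xhat : EuclideanSpace ℝ (Fin p) → EuclideanSpace ℝ (Fin p))
    (hxhat : ∀ y ∈ K, xhat y ∈ K ∧
      ∀ x ∈ K, Ft (xhat y) y + G (xhat y) ≤ Ft x y + G x) :
    ∀ y ∈ K, (xhat y = y ↔ ∀ x ∈ K, 0 ≤ ⟪F' y, x - y⟫ + G x - G y) := by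
  intro y hy
  have hderiv : ∀ x : EuclideanSpace ℝ (Fin p),
      HasDerivAt (fun t : ℝ => Ft (y + t • (x - y)) y) ⟪F' y, x - y⟫ 0 := by
    intro x
    have := aux_line_deriv (fun z => Ft z y) (Ft' y y) y (x - y) (hdiff y hy y)
    rwa [hconsist y hy] at this
  have hmemt : ∀ x ∈ K, ∀ t ∈ Set.Ioc (0:ℝ) 1, y + t • (x - y) ∈ K := by
    intro x hx t ht
    rw [aux_comb]
    exact hKcv hy hx (by linarith [ht.2]) (le_of_lt ht.1) (by ring)
  constructor
  · intro hfix x hx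
    have key : G y - G x ≤ ⟪F' y, x - y⟫ := by
      refine aux_le_deriv _ _ _ (hderiv x) ?_
      intro t ht
      have hz := hmemt x hx t ht
      have hmin := (hxhat y hy).2 _ hz
      rw [hfix] at hmin
      have hGc : G (y + t • (x - y)) ≤ (1 - t) * G y + t * G x := by
        rw [aux_comb]
        exact hG.2 (Set.mem_univ y) (Set.mem_univ x) (by linarith [ht.2])
          (le_of_lt ht.1) (by ring)
      simp only [zero_smul, add_zero]
      nlinarith
    linarith
  · intro hst
    have hmin : ∀ x ∈ K, Ft y y + G y ≤ Ft x y + G x := by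
      intro x hx
      have hgrad : ⟪F' y, x - y⟫ ≤ Ft x y - Ft y y := by
        refine aux_deriv_le _ _ _ (hderiv x) ?_
        intro t ht
        have hcv := ((hsc y hy).strictConvexOn hμ).convexOn
        have := hcv.2 hy hx (show (0:ℝ) ≤ 1 - t by linarith [ht.2])
          ht.1.le (show (1:ℝ) - t + t = 1 by ring)
        rw [← aux_comb] at this
        simp only [smul_eq_mul, zero_smul, add_zero] at this ⊢
        nlinarith
      have := hst x hx
      linarith
    have hstrict : StrictConvexOn ℝ K (fun x => Ft x y + G x) :=
      ((hsc y hy).strictConvexOn hμ).add_convexOn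
        (hG.subset (Set.subset_univ K) hKcv)
    exact hstrict.eq_of_isMinOn
      (isMinOn_iff.mpr fun x hx => (hxhat y hy).2 x hx)
      (isMinOn_iff.mpr fun x hx => hmin x hx) (hxhat y hy).1 hy
end

section
/- Let K ⊆ ℝ^p be closed and convex, F̃(·; y) μ-strongly convex and differentiable with ∇₁F̃ L̃-Lipschitz in both arguments, and G convex. Then the best-response map x̂(y) := argmin_{x∈K} F̃(x; y) + G(x) is Lipschitz continuous on K with constant L̃/μ. -/
open RealInnerProductSpace Topology Filter

private lemma min_strong_ineq {p : ℕ} {K : Set (EuclideanSpace ℝ (Fin p))}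
    {μ : ℝ} {f : EuclideanSpace ℝ (Fin p) → ℝ}
    (hf : StrongConvexOn K μ f) {x : EuclideanSpace ℝ (Fin p)} (hx : x ∈ K)
    (hmin : ∀ z ∈ K, f x ≤ f z) {z : EuclideanSpace ℝ (Fin p)} (hz : z ∈ K) :
    f x + μ / 2 * ‖z - x‖ ^ 2 ≤ f z := by
  have key : ∀ t ∈ Set.Ioc (0:ℝ) 1, f x + (1 - t) * (μ / 2 * ‖z - x‖ ^ 2) ≤ f z := by
    intro t ht
    have h1 := hf.2 hz hx ht.1.le (by linarith [ht.2] : (0:ℝ) ≤ 1 - t) (by ring)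
    have hmem : t • z + (1 - t) • x ∈ K := hf.1 hz hx ht.1.le (by linarith [ht.2]) (by ring)
    have h2 := hmin _ hmem
    simp only [smul_eq_mul] at h1
    nlinarith [ht.1]
  have hev : ∀ᶠ t in 𝓝[>] (0:ℝ),
      f x + (1 - t) * (μ / 2 * ‖z - x‖ ^ 2) ≤ f z := by
    filter_upwards [Ioc_mem_nhdsGT (by norm_num : (0:ℝ) < 1)] with t ht
    exact key t ht
  have htd : Filter.Tendsto (fun t : ℝ => f x + (1 - t) * (μ / 2 * ‖z - x‖ ^ 2))
      (𝓝[>] (0:ℝ)) (𝓝 (f x + (1 - 0) * (μ / 2 * ‖z - x‖ ^ 2))) :=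
    ((continuous_const.add ((continuous_const.sub continuous_id).mul
      continuous_const)).tendsto 0).mono_left nhdsWithin_le_nhds
  have := le_of_tendsto htd hev
  linarith

theorem stmt11 {p : ℕ} (K : Set (EuclideanSpace ℝ (Fin p)))
    (hKne : K.Nonempty) (hKcl : IsClosed K) (hKcv : Convex ℝ K)
    (Ft : EuclideanSpace ℝ (Fin p) → EuclideanSpace ℝ (Fin p) → ℝ)
    (Ft' : EuclideanSpace ℝ (Fin p) → EuclideanSpace ℝ (Fin p) → EuclideanSpace ℝ (Fin p))
    (μ Lt : ℝ) (hμ : 0 < μ) (hLt : 0 < Lt)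
    (hsc : ∀ y ∈ K, StrongConvexOn K μ (fun x => Ft x y))
    (hdiff : ∀ y ∈ K, ∀ x, HasGradientAt (fun z => Ft z y) (Ft' x y) x)
    (hlip : ∀ x x' y y', ‖Ft' x y - Ft' x' y'‖ ≤ Lt * (‖x - x'‖ + ‖y - y'‖))
    (G : EuclideanSpace ℝ (Fin p) → ℝ) (hG : ConvexOn ℝ Set.univ G)
    (xhat : EuclideanSpace ℝ (Fin p) → EuclideanSpace ℝ (Fin p))
    (hxhat : ∀ y ∈ K, xhat y ∈ K ∧
      ∀ x ∈ K, Ft (xhat y) y + G (xhat y) ≤ Ft x y + G x) :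
    ∀ y ∈ K, ∀ y' ∈ K, ‖xhat y - xhat y'‖ ≤ (Lt / μ) * ‖y - y'‖ := by
  intro y hy y' hy'
  have hsum : ∀ w ∈ K, StrongConvexOn K μ (fun z => Ft z w + G z) := by
    intro w hw
    refine ⟨hKcv, fun a ha b hb s t hs ht hst => ?_⟩
    have h1 := (hsc w hw).2 ha hb hs ht hst
    have h2 := hG.2 (Set.mem_univ a) (Set.mem_univ b) hs ht hst
    simp only [smul_eq_mul] at h1 h2 ⊢
    linarith
  have hxK := (hxhat y hy).1
  have hxK' := (hxhat y' hy').1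
  have A := min_strong_ineq (hsum y hy) hxK (hxhat y hy).2 hxK'
  have B := min_strong_ineq (hsum y' hy') hxK' (hxhat y' hy').2 hxK
  set c : ℝ → EuclideanSpace ℝ (Fin p) :=
    fun t => xhat y + t • (xhat y' - xhat y) with hc
  set φ : ℝ → ℝ := fun t => Ft (c t) y - Ft (c t) y' with hφ
  have hcderiv : ∀ t : ℝ, HasDerivAt c (xhat y' - xhat y) t := by
    intro t
    have := ((hasDerivAt_id t).smul_const (xhat y' - xhat y)).const_add (xhat y)
    rw [hc]; simpa only [id_eq, one_smul] using this
  have hφderiv : ∀ t : ℝ,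
      HasDerivAt φ (⟪Ft' (c t) y - Ft' (c t) y', xhat y' - xhat y⟫) t := by
    intro t
    have h1 : HasDerivAt (fun t => Ft (c t) y) (⟪Ft' (c t) y, xhat y' - xhat y⟫) t := by
      have := (hdiff y hy (c t)).hasFDerivAt.comp_hasDerivAt t (hcderiv t)
      simpa [InnerProductSpace.toDual_apply_apply, Function.comp_def] using this
    have h2 : HasDerivAt (fun t => Ft (c t) y') (⟪Ft' (c t) y', xhat y' - xhat y⟫) t := by
      have := (hdiff y' hy' (c t)).hasFDerivAt.comp_hasDerivAt t (hcderiv t)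
      simpa [InnerProductSpace.toDual_apply_apply, Function.comp_def] using this
    have := h1.sub h2
    simpa [inner_sub_left, Pi.sub_def] using this
  have hbound : ∀ t ∈ (Set.univ : Set ℝ),
      ‖⟪Ft' (c t) y - Ft' (c t) y', xhat y' - xhat y⟫‖
        ≤ Lt * ‖y - y'‖ * ‖xhat y' - xhat y‖ := by
    intro t _
    calc ‖⟪Ft' (c t) y - Ft' (c t) y', xhat y' - xhat y⟫‖
        ≤ ‖Ft' (c t) y - Ft' (c t) y'‖ * ‖xhat y' - xhat y‖ := by
          rw [Real.norm_eq_abs]; exact abs_real_inner_le_norm _ _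
      _ ≤ Lt * ‖y - y'‖ * ‖xhat y' - xhat y‖ := by
          apply mul_le_mul_of_nonneg_right _ (norm_nonneg _)
          have := hlip (c t) (c t) y y'
          simpa using this
  have hmvt : ‖φ 1 - φ 0‖ ≤ Lt * ‖y - y'‖ * ‖xhat y' - xhat y‖ * ‖(1:ℝ) - 0‖ :=
    Convex.norm_image_sub_le_of_norm_hasDerivWithin_le
      (fun t _ => (hφderiv t).hasDerivWithinAt) hbound convex_univ
      (Set.mem_univ 0) (Set.mem_univ 1)
  have h10 : ‖(1:ℝ) - 0‖ = 1 := by norm_num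
  rw [h10, mul_one] at hmvt
  have hc0 : c 0 = xhat y := by simp [hc]
  have hc1 : c 1 = xhat y' := by simp [hc]
  have hφval : φ 1 - φ 0 =
      Ft (xhat y') y - Ft (xhat y') y' - Ft (xhat y) y + Ft (xhat y) y' := by
    simp only [hφ, hc0, hc1]; ring
  have hrev : ‖xhat y' - xhat y‖ = ‖xhat y - xhat y'‖ := norm_sub_rev _ _
  rw [hφval, hrev] at hmvt
  rw [hrev] at A
  have habs : Ft (xhat y') y - Ft (xhat y') y' - Ft (xhat y) y + Ft (xhat y) y'
      ≤ Lt * ‖y - y'‖ * ‖xhat y - xhat y'‖ := le_trans (le_abs_self _) hmvt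
  have hkey : μ * ‖xhat y - xhat y'‖ ^ 2 ≤ Lt * ‖y - y'‖ * ‖xhat y - xhat y'‖ := by
    nlinarith [A, B]
  rcases eq_or_lt_of_le (norm_nonneg (xhat y - xhat y')) with h | h
  · rw [← h]; positivity
  · rw [div_mul_eq_mul_div, le_div_iff₀ hμ]
    nlinarith
end

section
/- Let K ⊆ ℝ^p be convex, F : ℝ^p → ℝ differentiable, G : ℝ^p → ℝ convex, x ∈ K, and x̂ ∈ K satisfy ⟨∇F(x), x̂ − x⟩ + G(x̂) − G(x) ≤ −μ‖x̂ − x‖² for some μ > 0. If ∇F is L-Lipschitz, then for α ∈ (0,1], U(x + α(x̂ − x)) ≤ U(x) − α(μ − αL/2)‖x̂ − x‖², where U = F + G. In particular, for α < 2μ/L the update strictly decreases U unless x̂ = x. -/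
open RealInnerProductSpace

lemma descent_aux {p : ℕ} (F : EuclideanSpace ℝ (Fin p) → ℝ)
    (F' : EuclideanSpace ℝ (Fin p) → EuclideanSpace ℝ (Fin p))
    (hF : ∀ x, HasGradientAt F (F' x) x)
    (L : ℝ) (hL : 0 < L)
    (hlip : ∀ a b, ‖F' a - F' b‖ ≤ L * ‖a - b‖)
    (x d : EuclideanSpace ℝ (Fin p)) (α : ℝ) (hα0 : 0 ≤ α) (hα1 : α ≤ 1) :
    F (x + α • d) ≤ F x + α * ⟪F' x, d⟫ + L * α ^ 2 * ‖d‖ ^ 2 / 2 := by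
  have hline : ∀ t : ℝ, HasDerivAt (fun t : ℝ => F (x + t • d)) ⟪F' (x + t • d), d⟫ t := by
    intro t
    have h1 : HasDerivAt (fun t : ℝ => x + t • d) d t := by
      simpa using ((hasDerivAt_id t).smul_const d).const_add x
    have h2 := (hF (x + t • d)).hasFDerivAt.comp_hasDerivAt t h1
    simpa [InnerProductSpace.toDual_apply_apply, Function.comp_def] using h2
  set φ : ℝ → ℝ := fun t => F (x + t • d) - t * ⟪F' x, d⟫ - L * t ^ 2 * ‖d‖ ^ 2 / 2 with hφ
  have hφd : ∀ t : ℝ, HasDerivAt φ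
      (⟪F' (x + t • d), d⟫ - ⟪F' x, d⟫ - L * t * ‖d‖ ^ 2) t := by
    intro t
    have h3 : HasDerivAt (fun t : ℝ => L * t ^ 2 * ‖d‖ ^ 2 / 2)
        (L * t * ‖d‖ ^ 2) t := by
      have := (((hasDerivAt_pow 2 t).const_mul L).mul_const (‖d‖ ^ 2)).div_const 2
      exact this.congr_deriv (by ring)
    exact (((hline t).sub ((hasDerivAt_id t).mul_const ⟪F' x, d⟫)).sub h3).congr_deriv (by ring)
  have hanti : AntitoneOn φ (Set.Icc 0 1) := by
    apply antitoneOn_of_deriv_nonpos (convex_Icc 0 1)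
    · exact fun t _ => (hφd t).differentiableAt.continuousAt.continuousWithinAt
    · intro t _
      exact (hφd t).differentiableAt.differentiableWithinAt
    · intro t ht
      rw [interior_Icc] at ht
      rw [(hφd t).deriv]
      have h4 : ⟪F' (x + t • d) - F' x, d⟫ ≤ ‖F' (x + t • d) - F' x‖ * ‖d‖ :=
        real_inner_le_norm _ _
      have h5 : ‖F' (x + t • d) - F' x‖ ≤ L * (t * ‖d‖) := by
        have := hlip (x + t • d) x
        simpa [abs_of_pos ht.1, norm_smul, mul_assoc] using this
      have h6 : ⟪F' (x + t • d), d⟫ - ⟪F' x, d⟫ ≤ L * t * ‖d‖ ^ 2 := by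
        rw [← inner_sub_left]
        calc ⟪F' (x + t • d) - F' x, d⟫ ≤ L * (t * ‖d‖) * ‖d‖ :=
              h4.trans (mul_le_mul_of_nonneg_right h5 (norm_nonneg d))
          _ = L * t * ‖d‖ ^ 2 := by ring
      linarith
  have := hanti (Set.mem_Icc.2 ⟨le_refl 0, zero_le_one⟩) (Set.mem_Icc.2 ⟨hα0, hα1⟩) hα0
  simp only [hφ, zero_smul, add_zero, zero_mul, mul_zero, zero_pow, sub_zero,
    zero_div] at this
  have h0 : (0:ℝ) ^ 2 = 0 := by norm_num
  linarith [this]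

theorem stmt12 {p : ℕ} (K : Set (EuclideanSpace ℝ (Fin p))) (hKcv : Convex ℝ K)
    (F : EuclideanSpace ℝ (Fin p) → ℝ)
    (F' : EuclideanSpace ℝ (Fin p) → EuclideanSpace ℝ (Fin p))
    (hF : ∀ x, HasGradientAt F (F' x) x)
    (G : EuclideanSpace ℝ (Fin p) → ℝ) (hG : ConvexOn ℝ Set.univ G)
    (L : ℝ) (hL : 0 < L)
    (hlip : ∀ a b, ‖F' a - F' b‖ ≤ L * ‖a - b‖)
    (μ : ℝ) (hμ : 0 < μ)
    (x xh : EuclideanSpace ℝ (Fin p)) (hx : x ∈ K) (hxh : xh ∈ K)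
    (hdesc : ⟪F' x, xh - x⟫ + G xh - G x ≤ -μ * ‖xh - x‖ ^ 2)
    (α : ℝ) (hα : α ∈ Set.Ioc (0 : ℝ) 1) :
    F (x + α • (xh - x)) + G (x + α • (xh - x)) ≤
        F x + G x - α * (μ - α * L / 2) * ‖xh - x‖ ^ 2 ∧
      (α < 2 * μ / L → xh ≠ x →
        F (x + α • (xh - x)) + G (x + α • (xh - x)) < F x + G x) := by
  obtain ⟨hα0, hα1⟩ := hα
  have hFle := descent_aux F F' hF L hL hlip x (xh - x) α hα0.le hα1
  have hGle : G (x + α • (xh - x)) ≤ (1 - α) * G x + α * G xh := by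
    have h := hG.2 (Set.mem_univ x) (Set.mem_univ xh)
      (by linarith : (0:ℝ) ≤ 1 - α) hα0.le (by ring)
    have heq : (1 - α) • x + α • xh = x + α • (xh - x) := by
      simp [smul_sub, sub_smul]; abel
    rw [heq] at h
    simpa [smul_eq_mul] using h
  have hmain : F (x + α • (xh - x)) + G (x + α • (xh - x)) ≤
      F x + G x - α * (μ - α * L / 2) * ‖xh - x‖ ^ 2 := by
    have := mul_le_mul_of_nonneg_left hdesc hα0.le
    nlinarith [hFle, hGle]
  refine ⟨hmain, fun hαμ hne => ?_⟩
  have hd : 0 < ‖xh - x‖ ^ 2 := by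
    have h := sub_ne_zero.2 hne
    exact pow_pos (norm_pos_iff.mpr h) 2
  have h7 : 0 < μ - α * L / 2 := by
    rw [lt_div_iff₀ hL] at hαμ
    nlinarith
  nlinarith [hmain, mul_pos (mul_pos hα0 h7) hd]
end

section
/- Let F̃(·; y) be μ-strongly convex and differentiable with ∇₁F̃(y; y) = ∇F(y), G convex, K closed convex, and x̂(y) = argmin_{x∈K} F̃(x; y) + G(x). Then for every y ∈ K: ⟨∇F(y), x̂(y) − y⟩ + G(x̂(y)) − G(y) ≤ −μ‖x̂(y) − y‖². -/
open RealInnerProductSpace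

section Aux

variable {E : Type*} [NormedAddCommGroup E] [InnerProductSpace ℝ E] [CompleteSpace E]

/-- Directional derivative as limit of difference quotients from the right. -/
lemma aux_slope_tendsto (f : E → ℝ) (g y d : E) (hf : HasGradientAt f g y) :
    Filter.Tendsto (fun t : ℝ => (f (y + t • d) - f y) / t) (nhdsWithin 0 (Set.Ioi 0))
      (nhds ⟪g, d⟫) := by
  have hline : HasDerivAt (fun t : ℝ => y + t • d) d 0 := by
    simpa using ((hasDerivAt_id (0:ℝ)).smul_const d).const_add y
  have hF : HasFDerivAt f (InnerProductSpace.toDual ℝ E g) y := hf.hasFDerivAt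
  have hF' : HasFDerivAt f (InnerProductSpace.toDual ℝ E g) ((fun t : ℝ => y + t • d) 0) := by
    simpa using hF
  have hcomp : HasDerivAt (fun t : ℝ => f (y + t • d)) ⟪g, d⟫ 0 := by
    have := hF'.comp_hasDerivAt 0 hline
    simpa [InnerProductSpace.toDual_apply_apply, Function.comp_def] using this
  have := hasDerivAt_iff_tendsto_slope.1 hcomp
  have hmono : nhdsWithin (0:ℝ) (Set.Ioi 0) ≤ nhdsWithin (0:ℝ) {(0:ℝ)}ᶜ :=
    nhdsWithin_mono 0 (fun t ht => ne_of_gt ht)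
  have h2 := this.mono_left hmono
  refine h2.congr (fun t => ?_)
  simp [slope_def_field, div_eq_inv_mul]

/-- Gradient inequality for strongly convex functions. -/
lemma aux_strong_grad (s : Set E) (μ : ℝ) (f : E → ℝ) (hf : StrongConvexOn s μ f)
    (g x y : E) (hx : x ∈ s) (hy : y ∈ s) (hg : HasGradientAt f g y) :
    ⟪g, x - y⟫ + μ / 2 * ‖x - y‖ ^ 2 ≤ f x - f y := by
  have hslope := aux_slope_tendsto f g y (x - y) hg
  have hrhs : Filter.Tendsto (fun t : ℝ => f x - f y - μ / 2 * (1 - t) * ‖x - y‖ ^ 2)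
      (nhdsWithin 0 (Set.Ioi 0)) (nhds (f x - f y - μ / 2 * ‖x - y‖ ^ 2)) := by
    have : Filter.Tendsto (fun t : ℝ => f x - f y - μ / 2 * (1 - t) * ‖x - y‖ ^ 2)
        (nhds (0:ℝ)) (nhds (f x - f y - μ / 2 * (1 - 0) * ‖x - y‖ ^ 2)) := by
      apply Filter.Tendsto.sub tendsto_const_nhds
      exact (((tendsto_const_nhds.sub Filter.tendsto_id).const_mul _).mul_const _)
    simpa using this.mono_left nhdsWithin_le_nhds
  have hev : ∀ᶠ t : ℝ in nhdsWithin 0 (Set.Ioi 0),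
      (f (y + t • (x - y)) - f y) / t ≤ f x - f y - μ / 2 * (1 - t) * ‖x - y‖ ^ 2 := by
    filter_upwards [Ioo_mem_nhdsGT_of_mem (by norm_num : (0:ℝ) ∈ Set.Ico 0 1)] with t ht
    obtain ⟨ht0, ht1⟩ := ht
    have hcvx := hf.2 hx hy (le_of_lt ht0) (by linarith : (0:ℝ) ≤ 1 - t) (by ring)
    have hpt : t • x + (1 - t) • y = y + t • (x - y) := by
      rw [smul_sub, sub_smul, one_smul]; abel
    rw [hpt] at hcvx
    rw [div_le_iff₀ ht0]
    simp only [smul_eq_mul] at hcvx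
    nlinarith [hcvx]
  have := le_of_tendsto_of_tendsto hslope hrhs hev
  linarith

/-- Quantitative minimizer inequality for a strongly convex + convex sum. -/
lemma aux_min (s : Set E) (μ : ℝ) (f g : E → ℝ) (hf : StrongConvexOn s μ f)
    (hg : ConvexOn ℝ s g) (xh y : E) (hxh : xh ∈ s) (hy : y ∈ s)
    (hmin : ∀ x ∈ s, f xh + g xh ≤ f x + g x) :
    f xh + g xh + μ / 2 * ‖xh - y‖ ^ 2 ≤ f y + g y := by
  have hev : ∀ᶠ t : ℝ in nhdsWithin 1 (Set.Iio 1),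
      f xh + g xh + μ / 2 * t * ‖xh - y‖ ^ 2 ≤ f y + g y := by
    filter_upwards [Ioo_mem_nhdsLT_of_mem (by norm_num : (1:ℝ) ∈ Set.Ioc 0 1)] with t ht
    obtain ⟨ht0, ht1⟩ := ht
    have hmem : t • xh + (1 - t) • y ∈ s := hf.1 hxh hy (le_of_lt ht0)
      (by linarith) (by ring)
    have h1 := hf.2 hxh hy (le_of_lt ht0) (by linarith : (0:ℝ) ≤ 1 - t) (by ring)
    have h2 := hg.2 hxh hy (le_of_lt ht0) (by linarith : (0:ℝ) ≤ 1 - t) (by ring)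
    have h3 := hmin _ hmem
    simp only [smul_eq_mul] at h1 h2
    nlinarith [h1, h2, h3]
  have hlim : Filter.Tendsto (fun t : ℝ => f xh + g xh + μ / 2 * t * ‖xh - y‖ ^ 2)
      (nhdsWithin 1 (Set.Iio 1)) (nhds (f xh + g xh + μ / 2 * 1 * ‖xh - y‖ ^ 2)) := by
    have : Filter.Tendsto (fun t : ℝ => f xh + g xh + μ / 2 * t * ‖xh - y‖ ^ 2)
        (nhds (1:ℝ)) (nhds (f xh + g xh + μ / 2 * 1 * ‖xh - y‖ ^ 2)) := by
      exact tendsto_const_nhds.add ((Filter.tendsto_id.const_mul _).mul_const _)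
    exact this.mono_left nhdsWithin_le_nhds
  have := le_of_tendsto hlim hev
  linarith

end Aux

theorem stmt13 {p : ℕ} (K : Set (EuclideanSpace ℝ (Fin p)))
    (hKcl : IsClosed K) (hKcv : Convex ℝ K)
    (F : EuclideanSpace ℝ (Fin p) → ℝ)
    (F' : EuclideanSpace ℝ (Fin p) → EuclideanSpace ℝ (Fin p))
    (hF : ∀ x, HasGradientAt F (F' x) x)
    (G : EuclideanSpace ℝ (Fin p) → ℝ) (hG : ConvexOn ℝ Set.univ G)
    (Ft : EuclideanSpace ℝ (Fin p) → EuclideanSpace ℝ (Fin p) → ℝ)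
    (Ft' : EuclideanSpace ℝ (Fin p) → EuclideanSpace ℝ (Fin p) → EuclideanSpace ℝ (Fin p))
    (μ : ℝ) (hμ : 0 < μ)
    (hsc : ∀ y ∈ K, StrongConvexOn K μ (fun x => Ft x y))
    (hdiff : ∀ y ∈ K, ∀ x, HasGradientAt (fun z => Ft z y) (Ft' x y) x)
    (hconsist : ∀ y ∈ K, Ft' y y = F' y)
    (xhat : EuclideanSpace ℝ (Fin p) → EuclideanSpace ℝ (Fin p))
    (hxhat : ∀ y ∈ K, xhat y ∈ K ∧
      ∀ x ∈ K, Ft (xhat y) y + G (xhat y) ≤ Ft x y + G x) :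
    ∀ y ∈ K, ⟪F' y, xhat y - y⟫ + G (xhat y) - G y ≤ -μ * ‖xhat y - y‖ ^ 2 := by
  intro y hy
  obtain ⟨hxK, hmin⟩ := hxhat y hy
  have hGK : ConvexOn ℝ K G := hG.subset (Set.subset_univ K) hKcv
  have hA := aux_strong_grad K μ (fun x => Ft x y) (hsc y hy) (Ft' y y)
    (xhat y) y hxK hy (hdiff y hy y)
  have hB := aux_min K μ (fun x => Ft x y) G (hsc y hy) hGK (xhat y) y hxK hy hmin
  rw [hconsist y hy] at hA
  have hn : ‖xhat y - y‖ = ‖xhat y - y‖ := rfl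
  nlinarith [hA, hB]
end

section
/- Let {ρ^t} ⊂ (0,1] with ∑ρ^t = ∞ and ∑(ρ^t)² < ∞, and let {e^t} ⊂ ℝ^p satisfy ∑_t ρ^t‖e^t‖ < ∞. Then the recursion d^{t+1} = (1 − ρ^t)d^t + ρ^t (g + e^t), for fixed g ∈ ℝ^p and arbitrary d^0, satisfies d^t → g. -/
open Filter Finset

lemma aux_tendsto_zero (ρ b a : ℕ → ℝ)
    (hρ : ∀ t, ρ t ∈ Set.Ioc (0 : ℝ) 1) (hρdiv : ¬ Summable ρ)
    (hb : Summable b) (hb0 : ∀ t, 0 ≤ b t) (ha0 : ∀ t, 0 ≤ a t)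
    (hrec : ∀ t, a (t + 1) ≤ (1 - ρ t) * a t + b t) :
    Tendsto a atTop (nhds 0) := by
  have hρ0 : ∀ t, 0 ≤ ρ t := fun t => (hρ t).1.le
  have hρ1 : ∀ t, 1 - ρ t ∈ Set.Icc (0 : ℝ) 1 := fun t =>
    ⟨by linarith [(hρ t).2], by linarith [(hρ t).1]⟩
  -- key unrolled bound
  have key : ∀ N t, a (N + t) ≤ (∏ k ∈ Ico N (N + t), (1 - ρ k)) * a N
      + ∑ k ∈ Ico N (N + t), b k := by
    intro N t
    induction t with
    | zero => simp
    | succ t ih =>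
      have hNt : N ≤ N + t := Nat.le_add_right _ _
      have h1 := hrec (N + t)
      have hprod0 : (0 : ℝ) ≤ ∏ k ∈ Ico N (N + t), (1 - ρ k) :=
        Finset.prod_nonneg fun k _ => (hρ1 k).1
      have hsum0 : (0 : ℝ) ≤ ∑ k ∈ Ico N (N + t), b k :=
        Finset.sum_nonneg fun k _ => hb0 k
      calc a (N + (t + 1)) = a (N + t + 1) := by ring_nf
        _ ≤ (1 - ρ (N + t)) * a (N + t) + b (N + t) := hrec _
        _ ≤ (1 - ρ (N + t)) * ((∏ k ∈ Ico N (N + t), (1 - ρ k)) * a N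
              + ∑ k ∈ Ico N (N + t), b k) + b (N + t) := by
            have := (hρ1 (N + t)).1
            nlinarith [ih]
        _ ≤ (∏ k ∈ Ico N (N + t + 1), (1 - ρ k)) * a N
              + ∑ k ∈ Ico N (N + t + 1), b k := by
            rw [Finset.prod_Ico_succ_top hNt, Finset.sum_Ico_succ_top hNt]
            have h2 := (hρ1 (N + t)).2
            have h1' := (hρ1 (N + t)).1
            nlinarith [hsum0]
  -- partial sums of ρ tend to infinity
  have hS : Tendsto (fun n => ∑ i ∈ range n, ρ i) atTop atTop :=
    (not_summable_iff_tendsto_nat_atTop_of_nonneg hρ0).mp hρdiv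
  -- convergence of partial sums of b
  have hbsum : Tendsto (fun n => ∑ i ∈ range n, b i) atTop (nhds (∑' i, b i)) :=
    hb.hasSum.tendsto_sum_nat
  rw [Metric.tendsto_atTop]
  intro ε hε
  -- choose N with tail < ε/2
  obtain ⟨N, hN⟩ := (Metric.tendsto_atTop.mp hbsum (ε / 2) (by linarith)) 
  have htail : ∀ t, ∑ k ∈ Ico N t, b k < ε / 2 := by
    intro t
    have h1 : ∑ k ∈ Ico N t, b k ≤ (∑' i, b i) - ∑ i ∈ range N, b i := by
      rcases le_or_gt N t with h | h
      · rw [Finset.sum_Ico_eq_sub _ h]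
        have := Summable.sum_le_tsum (range t) (fun i _ => hb0 i) hb
        linarith
      · rw [Finset.Ico_eq_empty (by omega)]
        simp
        have := Summable.sum_le_tsum (range N) (fun i _ => hb0 i) hb
        linarith
    have h2 := hN N le_rfl
    rw [Real.dist_eq, abs_sub_lt_iff] at h2
    linarith [h2.2]
  -- product bound and find T
  have hprodbound : ∀ t, N ≤ t → (∏ k ∈ Ico N t, (1 - ρ k)) ≤
      Real.exp (-(∑ k ∈ Ico N t, ρ k)) := by
    intro t ht
    have h1 : ∏ k ∈ Ico N t, (1 - ρ k) ≤ ∏ k ∈ Ico N t, Real.exp (-ρ k) :=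
      Finset.prod_le_prod (fun k _ => (hρ1 k).1)
        (fun k _ => by linarith [Real.add_one_le_exp (-ρ k)])
    rw [← Real.exp_sum] at h1
    simpa [Finset.sum_neg_distrib] using h1
  -- ∑_{Ico N t} ρ → ∞ in t
  have hS2 : Tendsto (fun t => ∑ k ∈ Ico N t, ρ k) atTop atTop := by
    have heq : ∀ᶠ t in atTop, ∑ i ∈ range t, ρ i - ∑ i ∈ range N, ρ i
        = ∑ k ∈ Ico N t, ρ k := by
      filter_upwards [eventually_ge_atTop N] with t ht
      rw [Finset.sum_Ico_eq_sub _ ht]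
    refine Tendsto.congr' heq ?_
    simpa [sub_eq_add_neg] using tendsto_atTop_add_const_right atTop
      (-(∑ i ∈ range N, ρ i)) hS
  have hexp : Tendsto (fun t => Real.exp (-(∑ k ∈ Ico N t, ρ k)) * a N)
      atTop (nhds 0) := by
    have := (Real.tendsto_exp_neg_atTop_nhds_zero.comp hS2).mul_const (a N)
    simpa using this
  rcases eq_or_lt_of_le hε.le with hε' | _
  · exact absurd hε (by linarith)
  obtain ⟨T, hT⟩ := (Metric.tendsto_atTop.mp hexp (ε / 2) (by linarith))
  refine ⟨max N T, fun t ht => ?_⟩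
  have htN : N ≤ t := le_trans (le_max_left _ _) ht
  have htT : T ≤ t := le_trans (le_max_right _ _) ht
  have hk := key N (t - N)
  rw [Nat.add_sub_cancel' htN] at hk
  have hexp' := hT t htT
  rw [Real.dist_eq, sub_zero, abs_of_nonneg (mul_nonneg (Real.exp_pos _).le (ha0 N))] at hexp'
  have hprod := hprodbound t htN
  rw [Real.dist_eq, sub_zero, abs_of_nonneg (ha0 t)]
  have haN := ha0 N
  have := htail t
  nlinarith [Finset.prod_nonneg (fun k (_ : k ∈ Ico N t) => (hρ1 k).1)]

theorem stmt17 {p : ℕ} (ρ : ℕ → ℝ) (hρ : ∀ t, ρ t ∈ Set.Ioc (0 : ℝ) 1)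
    (hρdiv : ¬ Summable ρ) (hρsq : Summable (fun t => (ρ t) ^ 2))
    (e : ℕ → EuclideanSpace ℝ (Fin p))
    (he : Summable (fun t => ρ t * ‖e t‖))
    (g : EuclideanSpace ℝ (Fin p))
    (d : ℕ → EuclideanSpace ℝ (Fin p))
    (hrec : ∀ t, d (t + 1) = (1 - ρ t) • d t + ρ t • (g + e t)) :
    Filter.Tendsto d Filter.atTop (nhds g) := by
  have hb0 : ∀ t, 0 ≤ ρ t * ‖e t‖ := fun t =>
    mul_nonneg (hρ t).1.le (norm_nonneg _)
  have hrec' : ∀ t, ‖d (t + 1) - g‖ ≤ (1 - ρ t) * ‖d t - g‖ + ρ t * ‖e t‖ := by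
    intro t
    have h1 : d (t + 1) - g = (1 - ρ t) • (d t - g) + ρ t • e t := by
      rw [hrec t]
      module
    rw [h1]
    calc ‖(1 - ρ t) • (d t - g) + ρ t • e t‖
        ≤ ‖(1 - ρ t) • (d t - g)‖ + ‖ρ t • e t‖ := norm_add_le _ _
      _ = |1 - ρ t| * ‖d t - g‖ + |ρ t| * ‖e t‖ := by
          rw [norm_smul, norm_smul, Real.norm_eq_abs, Real.norm_eq_abs]
      _ = (1 - ρ t) * ‖d t - g‖ + ρ t * ‖e t‖ := by
          rw [abs_of_nonneg (by linarith [(hρ t).2]),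
            abs_of_nonneg (hρ t).1.le]
  have := aux_tendsto_zero ρ (fun t => ρ t * ‖e t‖) (fun t => ‖d t - g‖)
    hρ hρdiv he hb0 (fun t => norm_nonneg _) hrec'
  rw [tendsto_iff_norm_sub_tendsto_zero]
  exact this
end
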